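/- arXiv:2412.08630 — 2 statements merged into one kernel-verified Lean document; each statement's English description precedes it below -/
import Mathlib

section
/- Let q > 0 and α ∈ (0,1), and let F be the Young function F(x) = max(|x|·e^{q(log|x|)^α} − e^{1-α}·e^{q(1-α)^α}, 0). Then there exist constants c_{α,q} ≥ 1 and y_{α,q} ≥ 1 such that for all y ≥ y_{α,q}, the Legendre transform satisfies F*(y) ≤ exp(c_{α,q}·(log y)^{1/α}). -/
open Real

/-- The Young function `F(x) = max(|x|·e^{q(log|x|)^α} − e^{1−α}·e^{q(1−α)^α}, 0)`. -/
noncomputable def F6 (q α x : ℝ) : ℝ :=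
  max (|x| * Real.exp (q * Real.log |x| ^ α) -
    Real.exp (1 - α) * Real.exp (q * (1 - α) ^ α)) 0

/-- The Legendre transform of `F6` satisfies `F*(y) ≤ exp(c·(log y)^{1/α})`
for all large `y`. -/
theorem stmt6 (q α : ℝ) (hq : 0 < q) (hα0 : 0 < α) (hα1 : α < 1) :
    ∃ c : ℝ, 1 ≤ c ∧ ∃ y₀ : ℝ, 1 ≤ y₀ ∧ ∀ y : ℝ, y₀ ≤ y →
      (⨆ x : ℝ, (x * y - F6 q α x)) ≤ Real.exp (c * Real.log y ^ (1 / α)) := by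
  have hqi : (0:ℝ) ≤ (1/q) ^ (1/α) := Real.rpow_nonneg (by positivity) _
  refine ⟨(1/q) ^ (1/α) + 2, by linarith, Real.exp (1 + q),
    Real.one_le_exp (by linarith), ?_⟩
  intro y hy
  have hy0 : (0:ℝ) < y := lt_of_lt_of_le (Real.exp_pos _) hy
  set L : ℝ := Real.log y with hLdef
  have hL : 1 + q ≤ L := (Real.le_log_iff_exp_le hy0).2 hy
  have hL1 : (1:ℝ) ≤ L := by linarith
  have hL0 : (0:ℝ) ≤ L := by linarith
  have hLp0 : (0:ℝ) ≤ L ^ (1/α) := Real.rpow_nonneg hL0 _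
  have hLpow : L ≤ L ^ (1/α) := by
    calc L = L ^ (1:ℝ) := (Real.rpow_one L).symm
    _ ≤ L ^ (1/α) := Real.rpow_le_rpow_of_exponent_le hL1
        (by rw [le_div_iff₀ hα0]; linarith)
  have hmul : (L/q) ^ (1/α) = (1/q) ^ (1/α) * L ^ (1/α) := by
    rw [show L/q = (1/q)*L by ring, Real.mul_rpow (by positivity) hL0]
  have hsum : (L/q) ^ (1/α) + L ≤ ((1/q) ^ (1/α) + 2) * L ^ (1/α) := by
    rw [hmul]; nlinarith
  have hylog : Real.exp L = y := Real.exp_log hy0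
  -- C ≤ bound
  have hCb : Real.exp (1 - α) * Real.exp (q * (1 - α) ^ α) ≤
      Real.exp (((1/q) ^ (1/α) + 2) * L ^ (1/α)) := by
    rw [← Real.exp_add]
    apply Real.exp_le_exp.2
    have h1 : (1-α) ^ α ≤ 1 := Real.rpow_le_one (by linarith) (by linarith) hα0.le
    nlinarith
  apply ciSup_le
  intro x
  have hF0 : (0:ℝ) ≤ F6 q α x := le_max_right _ _
  by_cases hx : |x| ≤ Real.exp ((L/q) ^ (1/α))
  · have : x * y ≤ Real.exp (((1/q) ^ (1/α) + 2) * L ^ (1/α)) := by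
      calc x * y ≤ |x| * y := mul_le_mul_of_nonneg_right (le_abs_self x) hy0.le
      _ ≤ Real.exp ((L/q) ^ (1/α)) * y := mul_le_mul_of_nonneg_right hx hy0.le
      _ = Real.exp ((L/q) ^ (1/α) + L) := by rw [Real.exp_add, hylog]
      _ ≤ _ := Real.exp_le_exp.2 hsum
    linarith
  · push_neg at hx
    have hxpos : (0:ℝ) < |x| := lt_trans (Real.exp_pos _) hx
    have hlx : (L/q) ^ (1/α) < Real.log |x| := (Real.lt_log_iff_exp_lt hxpos).2 hx
    have hlx0 : (0:ℝ) ≤ (L/q) ^ (1/α) := Real.rpow_nonneg (by positivity) _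
    have heq : L/q = ((L/q) ^ (1/α)) ^ α := by
      rw [← Real.rpow_mul (by positivity : (0:ℝ) ≤ L/q), one_div,
        inv_mul_cancel₀ hα0.ne', Real.rpow_one]
    have hlq : L/q ≤ Real.log |x| ^ α := by
      rw [heq]; exact Real.rpow_le_rpow hlx0 hlx.le hα0.le
    have hyexp : y ≤ Real.exp (q * Real.log |x| ^ α) := by
      rw [← hylog]
      apply Real.exp_le_exp.2
      rw [div_le_iff₀ hq] at hlq
      linarith [hlq]
    have hFge : |x| * Real.exp (q * Real.log |x| ^ α) -
        Real.exp (1 - α) * Real.exp (q * (1 - α) ^ α) ≤ F6 q α x := le_max_left _ _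
    have : x * y - F6 q α x ≤ Real.exp (1 - α) * Real.exp (q * (1 - α) ^ α) := by
      have h1 : x * y ≤ |x| * y := mul_le_mul_of_nonneg_right (le_abs_self x) hy0.le
      have h2 : |x| * y ≤ |x| * Real.exp (q * Real.log |x| ^ α) :=
        mul_le_mul_of_nonneg_left hyexp hxpos.le
      linarith
    linarith
end

section
/- Let q > 0, α ∈ (0,1), G(x) = x·e^{q(log x)^α}. If x ≥ e^{1-α} and y > 0 satisfy y = G'(x), then q·(log x)^α ≤ log y ≤ c·(log x)^α, where c = q + log(1 + qα(1-α)^{α-1})/(1-α)^α. -/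
open Real

theorem stmt8 (q α x y : ℝ) (hq : 0 < q) (hα0 : 0 < α) (hα1 : α < 1)
    (hx : Real.exp (1 - α) ≤ x) (hy : 0 < y)
    (hxy : y = Real.exp (q * Real.log x ^ α) * (1 + q * α * Real.log x ^ (α - 1))) :
    q * Real.log x ^ α ≤ Real.log y ∧
    Real.log y ≤
      (q + Real.log (1 + q * α * (1 - α) ^ (α - 1)) / (1 - α) ^ α) * Real.log x ^ α := by
  set L := Real.log x with hLdef
  have h1α : (0:ℝ) < 1 - α := by linarith
  have hL : 1 - α ≤ L := by
    have := Real.log_le_log (Real.exp_pos _) hx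
    rwa [Real.log_exp] at this
  have hLpos : 0 < L := lt_of_lt_of_le h1α hL
  have hb : 0 ≤ q * α * L ^ (α - 1) := by positivity
  have hbpos : 0 < 1 + q * α * L ^ (α - 1) := by linarith
  have hlogy : Real.log y = q * L ^ α + Real.log (1 + q * α * L ^ (α - 1)) := by
    rw [hxy, Real.log_mul (Real.exp_ne_zero _) (ne_of_gt hbpos), Real.log_exp]
  constructor
  · rw [hlogy]
    have : 0 ≤ Real.log (1 + q * α * L ^ (α - 1)) :=
      Real.log_nonneg (by linarith)
    linarith
  · rw [hlogy]
    have hpow : L ^ (α - 1) ≤ (1 - α) ^ (α - 1) :=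
      Real.rpow_le_rpow_of_nonpos h1α hL (by linarith)
    have hC : Real.log (1 + q * α * L ^ (α - 1)) ≤
        Real.log (1 + q * α * (1 - α) ^ (α - 1)) := by
      apply Real.log_le_log hbpos
      have := mul_le_mul_of_nonneg_left hpow (by positivity : (0:ℝ) ≤ q * α)
      linarith
    have hCnn : 0 ≤ Real.log (1 + q * α * (1 - α) ^ (α - 1)) := by
      have h := mul_pos (mul_pos hq hα0) (Real.rpow_pos_of_pos h1α (α - 1))
      exact Real.log_nonneg (by linarith)
    have hpow2 : (1 - α) ^ α ≤ L ^ α :=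
      Real.rpow_le_rpow (le_of_lt h1α) hL (le_of_lt hα0)
    have hppos : 0 < (1 - α) ^ α := Real.rpow_pos_of_pos h1α α
    have key : Real.log (1 + q * α * (1 - α) ^ (α - 1)) ≤
        Real.log (1 + q * α * (1 - α) ^ (α - 1)) / (1 - α) ^ α * L ^ α := by
      rw [div_mul_eq_mul_div, le_div_iff₀ hppos]
      nlinarith
    have hLa : 0 ≤ L ^ α := le_of_lt (Real.rpow_pos_of_pos hLpos α)
    nlinarith
end
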